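/- Assume τ > 0 and β̄·ℓ† ≤ min{τ, γ̄} (sub-regime A-1). Then every Wardrop equilibrium satisfies σ*_pool ≤ σ†_pool and β̄·ℓ_δ(σ*) ≤ min{τ, γ̄}. -/
import Mathlib


open MeasureTheory Set

namespace HOT

inductive Action : Type
  | toll
  | pool
  | o
  deriving DecidableEq

instance : MeasurableSpace Action := ⊤

/-- The rectangle of preference parameters `[0,β̄] × [0,γ̄]`. -/
def Rbox (βb γb : ℝ) : Set (ℝ × ℝ) := Icc (0:ℝ) βb ×ˢ Icc (0:ℝ) γb

/-- The strategy distribution of a strategy profile `s`: the `f`-mass of agents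
in the rectangle choosing each action. -/
noncomputable def stratDist (βb γb : ℝ) (f : ℝ × ℝ → ℝ) (s : ℝ × ℝ → Action)
    (a : Action) : ℝ :=
  ∫ p in Rbox βb γb ∩ s ⁻¹' {a}, f p

/-- HOT-lane vehicle flow induced by a strategy distribution. -/
noncomputable def xh (A : ℕ) (D : ℝ) (σ : Action → ℝ) : ℝ :=
  (σ Action.toll + σ Action.pool / (A : ℝ)) * D

/-- Ordinary-lane vehicle flow induced by a strategy distribution. -/
noncomputable def xo (D : ℝ) (σ : Action → ℝ) : ℝ := σ Action.o * D

/-- Latency difference `ℓ_δ(σ) = ℓ_o(x_o(σ)) − ℓ_h(x_h(σ))`. -/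
noncomputable def ldiff (ℓo ℓh : ℝ → ℝ) (A : ℕ) (D : ℝ) (σ : Action → ℝ) : ℝ :=
  ℓo (xo D σ) - ℓh (xh A D σ)

/-- The cost of agent `(β,γ)` for each action, given a strategy distribution. -/
noncomputable def cost (ℓo ℓh : ℝ → ℝ) (A : ℕ) (D τ : ℝ) (σ : Action → ℝ)
    (β γ : ℝ) : Action → ℝ
  | Action.toll => β * ℓh (xh A D σ) + τ
  | Action.pool => β * ℓh (xh A D σ) + γ
  | Action.o => β * ℓo (xo D σ)

/-- Wardrop equilibrium: every agent's action minimizes its own cost. -/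
def IsWardrop (ℓo ℓh : ℝ → ℝ) (A : ℕ) (D τ βb γb : ℝ) (f : ℝ × ℝ → ℝ)
    (s : ℝ × ℝ → Action) : Prop :=
  Measurable s ∧
  ∀ p ∈ Rbox βb γb, ∀ a : Action,
    cost ℓo ℓh A D τ (stratDist βb γb f s) p.1 p.2 (s p) ≤
      cost ℓo ℓh A D τ (stratDist βb γb f s) p.1 p.2 a

/-- Threshold carpool share `σ†_pool = ∫₀^β̄ ∫₀^{min(τ,γ̄)·β/β̄} f`. -/
noncomputable def sigmaDagger (βb γb τ : ℝ) (f : ℝ × ℝ → ℝ) : ℝ :=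
  ∫ β in (0:ℝ)..βb, ∫ γ in (0:ℝ)..(min τ γb * β / βb), f (β, γ)

/-- Threshold latency difference `ℓ† = ℓ_o((1−σ†)·D) − ℓ_h((σ†/A)·D)`. -/
noncomputable def ellDagger (ℓo ℓh : ℝ → ℝ) (A : ℕ) (D βb γb τ : ℝ)
    (f : ℝ × ℝ → ℝ) : ℝ :=
  ℓo ((1 - sigmaDagger βb γb τ f) * D) - ℓh (sigmaDagger βb γb τ f / (A : ℝ) * D)

/-- Regime-B toll share as a function of the latency difference `δ`. -/
noncomputable def gB (τ βb γb : ℝ) (f : ℝ × ℝ → ℝ) (δ : ℝ) : ℝ :=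
  ∫ γ in τ..γb, ∫ β in (τ / δ)..βb, f (β, γ)

/-- Regime-B carpool share as a function of the latency difference `δ`. -/
noncomputable def hB (τ βb : ℝ) (f : ℝ × ℝ → ℝ) (δ : ℝ) : ℝ :=
  ∫ γ in (0:ℝ)..τ, ∫ β in (γ / δ)..βb, f (β, γ)

end HOT

open HOT

/-- Fubini for the region below the line `γ = c β` inside the box. -/
lemma fubini_below (βb γb c : ℝ) (f : ℝ × ℝ → ℝ) (hβb : 0 < βb)
    (hc : 0 ≤ c) (hcb : c * βb ≤ γb)
    (hfint : MeasureTheory.IntegrableOn f (Rbox βb γb)) :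
    ∫ p in Rbox βb γb ∩ {p : ℝ × ℝ | p.2 ≤ c * p.1}, f p
      = ∫ β in (0:ℝ)..βb, ∫ γ in (0:ℝ)..(c * β), f (β, γ) := by
  set S : Set (ℝ × ℝ) := Rbox βb γb ∩ {p : ℝ × ℝ | p.2 ≤ c * p.1} with hS
  have hSm : MeasurableSet S :=
    (measurableSet_Icc.prod measurableSet_Icc).inter
      ((isClosed_le continuous_snd (continuous_const.mul continuous_fst)).measurableSet)
  have hInt : MeasureTheory.IntegrableOn f S := hfint.mono_set Set.inter_subset_left
  have hIndInt : MeasureTheory.Integrable (S.indicator f) :=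
    (MeasureTheory.integrable_indicator_iff hSm).2 hInt
  have key : ∀ x : ℝ, (∫ y, S.indicator f (x, y))
      = (Set.Icc (0:ℝ) βb).indicator (fun x => ∫ γ in (0:ℝ)..(c * x), f (x, γ)) x := by
    intro x
    by_cases hx : x ∈ Set.Icc (0:ℝ) βb
    · have hfib : ∀ y : ℝ, S.indicator f (x, y)
          = (Set.Icc (0:ℝ) (c * x)).indicator (fun y => f (x, y)) y := by
        intro y
        have hmem : (x, y) ∈ S ↔ y ∈ Set.Icc (0:ℝ) (c * x) := by
          constructor
          · rintro ⟨⟨_, hy⟩, hle⟩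
            exact ⟨hy.1, hle⟩
          · rintro ⟨h0, hle⟩
            refine ⟨⟨hx, h0, ?_⟩, hle⟩
            calc y ≤ c * x := hle
              _ ≤ c * βb := by nlinarith [hx.1, hx.2]
              _ ≤ γb := hcb
        by_cases hy : (x, y) ∈ S
        · rw [Set.indicator_of_mem hy, Set.indicator_of_mem (hmem.1 hy)]
        · rw [Set.indicator_of_notMem hy, Set.indicator_of_notMem (fun h => hy (hmem.2 h))]
      have hcx : (0:ℝ) ≤ c * x := mul_nonneg hc hx.1
      rw [Set.indicator_of_mem hx]
      simp only [hfib]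
      rw [MeasureTheory.integral_indicator measurableSet_Icc,
        MeasureTheory.integral_Icc_eq_integral_Ioc,
        ← intervalIntegral.integral_of_le hcx]
    · have hfib : ∀ y : ℝ, S.indicator f (x, y) = 0 := by
        intro y
        apply Set.indicator_of_notMem
        rintro ⟨⟨hx', _⟩, _⟩
        exact hx hx'
      rw [Set.indicator_of_notMem hx]
      simp only [hfib, MeasureTheory.integral_zero]
  calc ∫ p in S, f p = ∫ p, S.indicator f p := (MeasureTheory.integral_indicator hSm).symm
    _ = ∫ x, ∫ y, S.indicator f (x, y) := by
        rw [MeasureTheory.Measure.volume_eq_prod] at hIndInt ⊢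
        exact MeasureTheory.integral_prod _ hIndInt
    _ = ∫ x, (Set.Icc (0:ℝ) βb).indicator (fun x => ∫ γ in (0:ℝ)..(c * x), f (x, γ)) x :=
        MeasureTheory.integral_congr_ae (Filter.Eventually.of_forall key)
    _ = ∫ x in Set.Icc (0:ℝ) βb, ∫ γ in (0:ℝ)..(c * x), f (x, γ) :=
        MeasureTheory.integral_indicator measurableSet_Icc
    _ = ∫ β in (0:ℝ)..βb, ∫ γ in (0:ℝ)..(c * β), f (β, γ) := by
        rw [MeasureTheory.integral_Icc_eq_integral_Ioc,
          ← intervalIntegral.integral_of_le hβb.le]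

/-- The line `γ = c β` is a null set in the plane. -/
lemma line_null (c : ℝ) :
    (volume : MeasureTheory.Measure (ℝ × ℝ)) {p : ℝ × ℝ | p.2 = c * p.1} = 0 := by
  have hm : MeasurableSet {p : ℝ × ℝ | p.2 = c * p.1} :=
    (isClosed_eq continuous_snd (continuous_const.mul continuous_fst)).measurableSet
  rw [MeasureTheory.Measure.volume_eq_prod, MeasureTheory.Measure.prod_apply hm]
  have h : ∀ x : ℝ,
      (volume : MeasureTheory.Measure ℝ) (Prod.mk x ⁻¹' {p : ℝ × ℝ | p.2 = c * p.1}) = 0 := by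
    intro x
    have he : Prod.mk x ⁻¹' {p : ℝ × ℝ | p.2 = c * p.1} = {c * x} := by
      ext y; simp [Set.mem_preimage]
    rw [he, Real.volume_singleton]
  simp [h]

/-- in sub-regime A-1, every equilibrium satisfies
σ*_pool ≤ σ†_pool and β̄·ℓ_δ(σ*) ≤ min{τ, γ̄}. -/
theorem stmt8
    (ℓo ℓh : ℝ → ℝ) (A : ℕ) (D τ βb γb : ℝ) (f : ℝ × ℝ → ℝ)
    (hD : 0 < D) (hA : 2 ≤ A) (hβb : 0 < βb) (hγb : 0 < γb)
    (hoc : ContinuousOn ℓo (Ici 0)) (hom : StrictMonoOn ℓo (Ici 0))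
    (hhc : ContinuousOn ℓh (Ici 0)) (hhm : StrictMonoOn ℓh (Ici 0))
    (hfree : ℓo 0 = ℓh 0)
    (hfc : ContinuousOn f (Rbox βb γb)) (hfpos : ∀ p ∈ Rbox βb γb, 0 < f p)
    (hfint : (∫ p in Rbox βb γb, f p) = 1)
    (hτ : 0 < τ)
    (hreg : βb * ellDagger ℓo ℓh A D βb γb τ f ≤ min τ γb)
    (s : ℝ × ℝ → Action) (hs : IsWardrop ℓo ℓh A D τ βb γb f s) :
    stratDist βb γb f s Action.pool ≤ sigmaDagger βb γb τ f ∧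
    βb * ldiff ℓo ℓh A D (stratDist βb γb f s) ≤ min τ γb := by
  have hRm : MeasurableSet (Rbox βb γb) := measurableSet_Icc.prod measurableSet_Icc
  have hRint : MeasureTheory.IntegrableOn f (Rbox βb γb) :=
    hfc.integrableOn_compact (isCompact_Icc.prod isCompact_Icc)
  set m : ℝ := min τ γb with hm
  have hm0 : 0 < m := lt_min hτ hγb
  set c : ℝ := m / βb with hc
  have hc0 : 0 ≤ c := div_nonneg hm0.le hβb.le
  have hcb : c * βb ≤ γb := by
    rw [hc, div_mul_cancel₀ _ hβb.ne']
    exact min_le_right _ _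
  set σ := stratDist βb γb f s with hσ
  set δ : ℝ := ldiff ℓo ℓh A D σ with hδ
  set σd : ℝ := sigmaDagger βb γb τ f with hσd
  -- the region S below the threshold line
  set S : Set (ℝ × ℝ) := Rbox βb γb ∩ {p : ℝ × ℝ | p.2 ≤ c * p.1} with hSdef
  have hSm : MeasurableSet S :=
    hRm.inter ((isClosed_le continuous_snd (continuous_const.mul continuous_fst)).measurableSet)
  have hSsub : S ⊆ Rbox βb γb := Set.inter_subset_left
  have hSInt : MeasureTheory.IntegrableOn f S := hRint.mono_set hSsub
  -- σ† equals the integral over S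
  have hsd : σd = ∫ p in S, f p := by
    rw [hσd, hSdef, fubini_below βb γb c f hβb hc0 hcb hRint, sigmaDagger]
    have he : ∀ β : ℝ, min τ γb * β / βb = c * β := by
      intro β; rw [hc, hm]; ring
    simp only [he]
  have hsd_nonneg : 0 ≤ σd := by
    rw [hsd]
    exact MeasureTheory.setIntegral_nonneg hSm (fun p hp => (hfpos p (hSsub hp)).le)
  have hsd_le_one : σd ≤ 1 := by
    rw [hsd, ← hfint]
    exact MeasureTheory.setIntegral_mono_set hRint
      ((MeasureTheory.ae_restrict_iff' hRm).2
        (Filter.Eventually.of_forall (fun p hp => (hfpos p hp).le)))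
      (HasSubset.Subset.eventuallyLE hSsub)
  -- measurability of strategy sets
  have hsetm : ∀ a : Action, MeasurableSet (Rbox βb γb ∩ s ⁻¹' {a}) := fun a =>
    hRm.inter (hs.1 MeasurableSpace.measurableSet_top)
  have hsetsub : ∀ a : Action, Rbox βb γb ∩ s ⁻¹' {a} ⊆ Rbox βb γb :=
    fun a => Set.inter_subset_left
  have hsetint : ∀ a : Action, MeasureTheory.IntegrableOn f (Rbox βb γb ∩ s ⁻¹' {a}) :=
    fun a => hRint.mono_set (hsetsub a)
  have hσnn : ∀ a : Action, 0 ≤ σ a := fun a =>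
    MeasureTheory.setIntegral_nonneg (hsetm a) (fun p hp => (hfpos p (hsetsub a hp)).le)
  -- sum of shares is 1
  have hsum : σ Action.toll + σ Action.pool + σ Action.o = 1 := by
    have hUnion : (Rbox βb γb ∩ s ⁻¹' {Action.toll}) ∪
        ((Rbox βb γb ∩ s ⁻¹' {Action.pool}) ∪ (Rbox βb γb ∩ s ⁻¹' {Action.o}))
        = Rbox βb γb := by
      ext p
      simp only [Set.mem_union, Set.mem_inter_iff, Set.mem_preimage, Set.mem_singleton_iff]
      constructor
      · rintro (⟨h, _⟩ | ⟨h, _⟩ | ⟨h, _⟩) <;> exact h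
      · intro h; cases hsp : s p <;> tauto
    have hd1 : Disjoint (Rbox βb γb ∩ s ⁻¹' {Action.pool}) (Rbox βb γb ∩ s ⁻¹' {Action.o}) := by
      rw [Set.disjoint_iff_inter_eq_empty]
      ext p
      simp only [Set.mem_inter_iff, Set.mem_preimage, Set.mem_singleton_iff,
        Set.mem_empty_iff_false, iff_false]
      rintro ⟨⟨_, h1⟩, _, h2⟩
      rw [h1] at h2; simp at h2
    have hd2 : Disjoint (Rbox βb γb ∩ s ⁻¹' {Action.toll})
        ((Rbox βb γb ∩ s ⁻¹' {Action.pool}) ∪ (Rbox βb γb ∩ s ⁻¹' {Action.o})) := by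
      rw [Set.disjoint_iff_inter_eq_empty]
      ext p
      simp only [Set.mem_inter_iff, Set.mem_union, Set.mem_preimage, Set.mem_singleton_iff,
        Set.mem_empty_iff_false, iff_false]
      rintro ⟨⟨_, h1⟩, (⟨_, h2⟩ | ⟨_, h2⟩)⟩ <;> (rw [h1] at h2; simp at h2)
    have e1 : ∫ p in (Rbox βb γb ∩ s ⁻¹' {Action.pool}) ∪ (Rbox βb γb ∩ s ⁻¹' {Action.o}), f p
        = σ Action.pool + σ Action.o :=
      MeasureTheory.setIntegral_union hd1 (hsetm Action.o)
        (hsetint Action.pool) (hsetint Action.o)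
    have e2 : ∫ p in (Rbox βb γb ∩ s ⁻¹' {Action.toll}) ∪
        ((Rbox βb γb ∩ s ⁻¹' {Action.pool}) ∪ (Rbox βb γb ∩ s ⁻¹' {Action.o})), f p
        = σ Action.toll + (σ Action.pool + σ Action.o) := by
      rw [MeasureTheory.setIntegral_union hd2 ((hsetm Action.pool).union (hsetm Action.o))
        (hsetint Action.toll) ((hsetint Action.pool).union (hsetint Action.o)), e1]
      rfl
    rw [hUnion, hfint] at e2
    linarith
  -- equilibrium consequences
  have hpool_cond : ∀ p ∈ Rbox βb γb, s p = Action.pool → p.2 ≤ p.1 * δ := by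
    intro p hp hsp
    have h := hs.2 p hp Action.o
    rw [hsp] at h
    simp only [cost] at h
    have hex : p.1 * δ = p.1 * ℓo (xo D σ) - p.1 * ℓh (xh A D σ) := by
      rw [hδ, ldiff]; ring
    rw [← hσ] at h
    linarith
  have ho_cond : ∀ p ∈ Rbox βb γb, s p = Action.o → p.1 * δ ≤ p.2 := by
    intro p hp hsp
    have h := hs.2 p hp Action.pool
    rw [hsp] at h
    simp only [cost] at h
    have hex : p.1 * δ = p.1 * ℓo (xo D σ) - p.1 * ℓh (xh A D σ) := by
      rw [hδ, ldiff]; ring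
    rw [← hσ] at h
    linarith
  -- key claim: βb * δ ≤ m
  have hkey : βb * δ ≤ m := by
    by_contra hcon
    push_neg at hcon
    have hcδ : c < δ := by
      rw [hc, div_lt_iff₀ hβb]
      linarith [hcon, mul_comm βb δ]
    -- the region strictly above the line, and the line itself
    set T : Set (ℝ × ℝ) := Rbox βb γb \ S with hTdef
    set L : Set (ℝ × ℝ) := Rbox βb γb ∩ {p : ℝ × ℝ | p.2 = c * p.1} with hLdef
    have hTm : MeasurableSet T := hRm.diff hSm
    have hTsub : T ⊆ Rbox βb γb := Set.diff_subset
    have hTInt : MeasureTheory.IntegrableOn f T := hRint.mono_set hTsub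
    have hLm : MeasurableSet L :=
      hRm.inter ((isClosed_eq continuous_snd (continuous_const.mul continuous_fst)).measurableSet)
    have hLnull : (volume : MeasureTheory.Measure (ℝ × ℝ)) L = 0 :=
      MeasureTheory.measure_mono_null Set.inter_subset_right (line_null c)
    have hLzero : ∫ p in L, f p = 0 := by
      rw [MeasureTheory.Measure.restrict_eq_zero.2 hLnull]
      exact MeasureTheory.integral_zero_measure f
    have hTLInt : MeasureTheory.IntegrableOn f (T ∪ L) :=
      hRint.mono_set (Set.union_subset hTsub Set.inter_subset_left)
    -- the o-region is contained in T ∪ L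
    have hosub : Rbox βb γb ∩ s ⁻¹' {Action.o} ⊆ T ∪ L := by
      rintro p ⟨hp, hsp⟩
      have h1 : p.1 * δ ≤ p.2 := ho_cond p hp (by simpa using hsp)
      have h2 : c * p.1 ≤ p.2 := by
        have : c * p.1 ≤ δ * p.1 := mul_le_mul_of_nonneg_right hcδ.le hp.1.1
        nlinarith [mul_comm δ p.1]
      rcases eq_or_lt_of_le h2 with heq | hlt
      · exact Or.inr ⟨hp, heq.symm⟩
      · exact Or.inl ⟨hp, fun hSp => absurd hSp.2 (not_le.2 hlt)⟩
    have hTL : Disjoint T L := by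
      rw [Set.disjoint_iff_inter_eq_empty]
      ext p
      simp only [Set.mem_inter_iff, Set.mem_empty_iff_false, iff_false]
      rintro ⟨⟨_, hnS⟩, hpL⟩
      exact hnS ⟨hpL.1, le_of_eq hpL.2⟩
    have hσo_le : σ Action.o ≤ ∫ p in T, f p := by
      have h1 : σ Action.o ≤ ∫ p in T ∪ L, f p :=
        MeasureTheory.setIntegral_mono_set hTLInt
          ((MeasureTheory.ae_restrict_iff' (hTm.union hLm)).2
            (Filter.Eventually.of_forall (fun p hp => (hfpos p
              ((Set.union_subset hTsub Set.inter_subset_left) hp)).le)))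
          (HasSubset.Subset.eventuallyLE hosub)
      rwa [MeasureTheory.setIntegral_union hTL hLm hTInt
        (hRint.mono_set Set.inter_subset_left), hLzero, add_zero] at h1
    -- integral over T equals 1 - σ†
    have hT_val : ∫ p in T, f p = 1 - σd := by
      have hUn : S ∪ T = Rbox βb γb := Set.union_diff_cancel hSsub
      have hDisj : Disjoint S T := Set.disjoint_sdiff_right
      have := MeasureTheory.setIntegral_union hDisj hTm hSInt hTInt
      rw [hUn, hfint, ← hsd] at this
      linarith
    have hσo_le' : σ Action.o ≤ 1 - σd := by rw [← hT_val]; exact hσo_le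
    -- flows comparison
    have hxo_le : xo D σ ≤ (1 - σd) * D := by
      rw [xo]; exact mul_le_mul_of_nonneg_right hσo_le' hD.le
    have hA1 : (1:ℝ) ≤ (A:ℝ) := by
      have : (2:ℝ) ≤ (A:ℝ) := by exact_mod_cast hA
      linarith
    have hA0 : (0:ℝ) < (A:ℝ) := by linarith
    have htp : σd ≤ σ Action.toll + σ Action.pool := by linarith [hσo_le', hsum]
    have hxh_ge : σd / (A:ℝ) * D ≤ xh A D σ := by
      rw [xh]
      apply mul_le_mul_of_nonneg_right _ hD.le
      have h1 : σd / (A:ℝ) ≤ (σ Action.toll + σ Action.pool) / (A:ℝ) :=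
        (div_le_div_iff_of_pos_right hA0).2 htp
      have h2 : (σ Action.toll + σ Action.pool) / (A:ℝ)
          = σ Action.toll / (A:ℝ) + σ Action.pool / (A:ℝ) := add_div _ _ _
      have h3 : σ Action.toll / (A:ℝ) ≤ σ Action.toll :=
        div_le_self (hσnn Action.toll) hA1
      linarith
    -- monotonicity of latencies
    have hxo_mem : xo D σ ∈ Set.Ici (0:ℝ) := mul_nonneg (hσnn Action.o) hD.le
    have hone : (1 - σd) * D ∈ Set.Ici (0:ℝ) :=
      mul_nonneg (by linarith [hsd_le_one]) hD.le
    have hsdA : σd / (A:ℝ) * D ∈ Set.Ici (0:ℝ) :=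
      mul_nonneg (div_nonneg hsd_nonneg hA0.le) hD.le
    have hxh_mem : xh A D σ ∈ Set.Ici (0:ℝ) := le_trans hsdA hxh_ge
    have hlo : ℓo (xo D σ) ≤ ℓo ((1 - σd) * D) :=
      hom.monotoneOn hxo_mem hone hxo_le
    have hlh : ℓh (σd / (A:ℝ) * D) ≤ ℓh (xh A D σ) :=
      hhm.monotoneOn hsdA hxh_mem hxh_ge
    have hδle : δ ≤ ellDagger ℓo ℓh A D βb γb τ f := by
      rw [hδ, ldiff, ellDagger, ← hσd]
      linarith
    have : βb * δ ≤ m := by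
      calc βb * δ ≤ βb * ellDagger ℓo ℓh A D βb γb τ f :=
            mul_le_mul_of_nonneg_left hδle hβb.le
        _ ≤ m := hreg
    linarith
  refine ⟨?_, hkey⟩
  -- the pool region is contained in S
  have hδc : δ ≤ c := by
    rw [hc, le_div_iff₀ hβb]
    linarith [mul_comm δ βb]
  have hpsub : Rbox βb γb ∩ s ⁻¹' {Action.pool} ⊆ S := by
    rintro p ⟨hp, hsp⟩
    refine ⟨hp, ?_⟩
    have h1 : p.2 ≤ p.1 * δ := hpool_cond p hp (by simpa using hsp)
    have h2 : p.1 * δ ≤ p.1 * c := mul_le_mul_of_nonneg_left hδc hp.1.1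
    have : p.2 ≤ p.1 * c := le_trans h1 h2
    simpa [mul_comm] using this
  calc σ Action.pool ≤ ∫ p in S, f p :=
        MeasureTheory.setIntegral_mono_set hSInt
          ((MeasureTheory.ae_restrict_iff' hSm).2
            (Filter.Eventually.of_forall (fun p hp => (hfpos p (hSsub hp)).le)))
          (HasSubset.Subset.eventuallyLE hpsub)
    _ = σd := hsd.symm
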